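/- Almost As Good As New Lemma (gentle measurement): Let ρ be a density matrix on ℂ^d and let Λ be a POVM element on ℂ^d such that the measurement outcome 1 occurs with probability tr(Λρ) = ε, where ε < 1. Let ρ₀ := √(1−Λ) ρ √(1−Λ) / tr((1−Λ)ρ) be the normalized post-measurement state conditioned on outcome 0 (note tr((1−Λ)ρ) = 1 − ε > 0, so ρ₀ is a density matrix). Then the trace distance satisfies ‖ρ − ρ₀‖_tr ≤ √ε. -/

import Mathlib

open Matrix BigOperators ComplexOrder

/-- The square root of a positive semidefinite matrix (the definition removed from Mathlib). -/
noncomputable def Matrix.PosSemidef.sqrt {n 𝕜 : Type*} [Fintype n] [RCLike 𝕜] [DecidableEq n]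
    {A : Matrix n n 𝕜} (hA : A.PosSemidef) : Matrix n n 𝕜 :=
  hA.1.eigenvectorUnitary.1 * diagonal ((↑) ∘ (√·) ∘ hA.1.eigenvalues) *
    (star hA.1.eigenvectorUnitary : Matrix n n 𝕜)

variable {d : ℕ}

lemma Matrix.PosSemidef.posSemidef_sqrt {A : Matrix (Fin d) (Fin d) ℂ} (hA : A.PosSemidef) :
    hA.sqrt.PosSemidef := by
  unfold Matrix.PosSemidef.sqrt
  have h : (diagonal ((↑) ∘ (√·) ∘ hA.1.eigenvalues) : Matrix (Fin d) (Fin d) ℂ).PosSemidef := by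
    rw [posSemidef_diagonal_iff]
    intro i
    simp [Real.sqrt_nonneg]
  have := h.mul_mul_conjTranspose_same (hA.1.eigenvectorUnitary : Matrix (Fin d) (Fin d) ℂ)
  rwa [← Matrix.star_eq_conjTranspose] at this

lemma Matrix.PosSemidef.sqrt_mul_self {A : Matrix (Fin d) (Fin d) ℂ} (hA : A.PosSemidef) :
    hA.sqrt * hA.sqrt = A := by
  unfold Matrix.PosSemidef.sqrt
  have hU : star (hA.1.eigenvectorUnitary : Matrix (Fin d) (Fin d) ℂ) *
      (hA.1.eigenvectorUnitary : Matrix (Fin d) (Fin d) ℂ) = 1 :=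
    Matrix.mem_unitaryGroup_iff'.mp hA.1.eigenvectorUnitary.2
  conv_rhs => rw [hA.1.spectral_theorem, Unitary.conjStarAlgAut_apply]
  set U : Matrix (Fin d) (Fin d) ℂ := (hA.1.eigenvectorUnitary : Matrix (Fin d) (Fin d) ℂ)
  set D : Matrix (Fin d) (Fin d) ℂ := diagonal ((RCLike.ofReal : ℝ → ℂ) ∘ (√·) ∘ hA.1.eigenvalues) with hD
  rw [show U * D * star U * (U * D * star U) = U * (D * ((star U * U) * (D * star U))) by
    simp only [Matrix.mul_assoc], hU, Matrix.one_mul, ← Matrix.mul_assoc D, hD,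
    diagonal_mul_diagonal, ← Matrix.mul_assoc]
  congr 2
  refine congrArg diagonal (funext fun i => ?_)
  simp only [Function.comp_apply]
  norm_cast
  exact Real.mul_self_sqrt (hA.eigenvalues_nonneg i)

lemma trace_psd_nonneg {A : Matrix (Fin d) (Fin d) ℂ} (hA : A.PosSemidef) :
    0 ≤ A.trace := by
  rw [Matrix.trace]
  refine Finset.sum_nonneg fun i _ => ?_
  have := hA.2 (Finsupp.single i 1)
  simpa [Finsupp.sum_single_index, Matrix.diag] using this

lemma trace_mul_psd_nonneg {A B : Matrix (Fin d) (Fin d) ℂ}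
    (hA : A.PosSemidef) (hB : B.PosSemidef) : 0 ≤ (A * B).trace := by
  have h1 : (A * B).trace = (hB.sqrt * A * hB.sqrt).trace := by
    conv_lhs => rw [← hB.sqrt_mul_self]
    rw [← Matrix.mul_assoc, Matrix.trace_mul_comm, Matrix.mul_assoc]
  rw [h1]
  have := hA.mul_mul_conjTranspose_same hB.sqrt
  rw [hB.posSemidef_sqrt.1.eq] at this
  exact trace_psd_nonneg this

lemma trace_conj_sq (A : Matrix (Fin d) (Fin d) ℂ) :
    (Aᴴ * A).trace = ((∑ p : Fin d × Fin d, ‖A p.1 p.2‖ ^ 2 : ℝ) : ℂ) := by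
  rw [Matrix.trace, Fintype.sum_prod_type, Finset.sum_comm]
  push_cast
  refine Finset.sum_congr rfl fun j _ => ?_
  simp only [Matrix.diag, Matrix.mul_apply, Matrix.conjTranspose_apply]
  refine Finset.sum_congr rfl fun i _ => ?_
  rw [RCLike.star_def, RCLike.conj_mul]
  norm_num

lemma trace_cs (A B : Matrix (Fin d) (Fin d) ℂ) :
    ‖(Aᴴ * B).trace‖ ≤ Real.sqrt (Aᴴ * A).trace.re * Real.sqrt (Bᴴ * B).trace.re := by
  let x : EuclideanSpace ℂ (Fin d × Fin d) := WithLp.toLp 2 (fun p => A p.1 p.2)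
  let y : EuclideanSpace ℂ (Fin d × Fin d) := WithLp.toLp 2 (fun p => B p.1 p.2)
  have hxy : (Aᴴ * B).trace = inner (𝕜 := ℂ) x y := by
    rw [Matrix.trace, PiLp.inner_apply, Fintype.sum_prod_type, Finset.sum_comm]
    refine Finset.sum_congr rfl fun j _ => ?_
    simp [Matrix.diag, Matrix.mul_apply, Matrix.conjTranspose_apply, x, y, RCLike.inner_apply]
    exact Finset.sum_congr rfl fun i _ => mul_comm _ _
  have hx : Real.sqrt (Aᴴ * A).trace.re = ‖x‖ := by
    rw [trace_conj_sq, Complex.ofReal_re, EuclideanSpace.norm_eq]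
  have hy : Real.sqrt (Bᴴ * B).trace.re = ‖y‖ := by
    rw [trace_conj_sq, Complex.ofReal_re, EuclideanSpace.norm_eq]
  rw [hxy, hx, hy]
  exact norm_inner_le_norm x y

lemma proj_cs (Q N ρ : Matrix (Fin d) (Fin d) ℂ) (hQ : Q.IsHermitian) (hQ2 : Q * Q = Q)
    (hρ : ρ.PosSemidef) (hN : N.IsHermitian) :
    (Q * (N * ρ)).trace.re ≤
      Real.sqrt (Q * ρ).trace.re * Real.sqrt (Q * (N * ρ * N)).trace.re := by
  set R := hρ.sqrt with hR
  have hRh : Rᴴ = R := hρ.posSemidef_sqrt.1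
  have hRR : R * R = ρ := hρ.sqrt_mul_self
  have e1 : ((Q * R)ᴴ * (Q * N * R)).trace = (Q * (N * ρ)).trace := by
    rw [Matrix.conjTranspose_mul, hRh, hQ.eq]
    rw [show R * Q * (Q * N * R) = R * ((Q * Q) * (N * R)) by simp only [Matrix.mul_assoc]]
    rw [hQ2, Matrix.trace_mul_comm]
    rw [show Q * (N * R) * R = Q * (N * (R * R)) by simp only [Matrix.mul_assoc]]
    rw [hRR]
  have e2 : ((Q * R)ᴴ * (Q * R)).trace = (Q * ρ).trace := by
    rw [Matrix.conjTranspose_mul, hRh, hQ.eq]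
    rw [show R * Q * (Q * R) = R * ((Q * Q) * R) by simp only [Matrix.mul_assoc]]
    rw [hQ2, Matrix.trace_mul_comm]
    rw [show Q * R * R = Q * (R * R) by simp only [Matrix.mul_assoc], hRR]
  have e3 : ((Q * N * R)ᴴ * (Q * N * R)).trace = (Q * (N * ρ * N)).trace := by
    rw [Matrix.conjTranspose_mul, Matrix.conjTranspose_mul, hRh, hQ.eq, hN.eq]
    rw [show R * (N * Q) * (Q * N * R) = R * (N * ((Q * Q) * (N * R))) by
      simp only [Matrix.mul_assoc]]
    rw [hQ2, Matrix.trace_mul_comm]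
    rw [show N * (Q * (N * R)) * R = N * (Q * (N * (R * R))) by
      simp only [Matrix.mul_assoc], hRR, Matrix.trace_mul_comm]
    congr 1
    simp only [Matrix.mul_assoc]
  calc (Q * (N * ρ)).trace.re ≤ ‖(Q * (N * ρ)).trace‖ := Complex.re_le_norm _
    _ = ‖((Q * R)ᴴ * (Q * N * R)).trace‖ := by rw [e1]
    _ ≤ Real.sqrt ((Q * R)ᴴ * (Q * R)).trace.re *
        Real.sqrt ((Q * N * R)ᴴ * (Q * N * R)).trace.re := trace_cs _ _
    _ = Real.sqrt (Q * ρ).trace.re * Real.sqrt (Q * (N * ρ * N)).trace.re := by rw [e2, e3]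

lemma trace_eq_sum_eigen {A : Matrix (Fin d) (Fin d) ℂ} (hA : A.IsHermitian) :
    A.trace = ((∑ i, hA.eigenvalues i : ℝ) : ℂ) := by
  conv_lhs => rw [hA.spectral_theorem, Unitary.conjStarAlgAut_apply]
  rw [Matrix.trace_mul_comm,
    show star (hA.eigenvectorUnitary : Matrix (Fin d) (Fin d) ℂ) *
      ((hA.eigenvectorUnitary : Matrix (Fin d) (Fin d) ℂ) *
        Matrix.diagonal (RCLike.ofReal ∘ hA.eigenvalues)) =
      (star (hA.eigenvectorUnitary : Matrix (Fin d) (Fin d) ℂ) *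
        (hA.eigenvectorUnitary : Matrix (Fin d) (Fin d) ℂ)) *
        Matrix.diagonal (RCLike.ofReal ∘ hA.eigenvalues) by simp only [Matrix.mul_assoc],
    Matrix.mem_unitaryGroup_iff'.mp hA.eigenvectorUnitary.2, Matrix.one_mul,
    Matrix.trace_diagonal]
  push_cast
  rfl

lemma sqrt_sub_sq_psd {Λ : Matrix (Fin d) (Fin d) ℂ} (hΛ : Λ.PosSemidef)
    (hΛ1 : (1 - Λ).PosSemidef) : (hΛ1.sqrt - (1 - Λ)).PosSemidef := by
  set W : Matrix (Fin d) (Fin d) ℂ := (hΛ1.1.eigenvectorUnitary : Matrix (Fin d) (Fin d) ℂ) with hW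
  set μ : Fin d → ℝ := hΛ1.1.eigenvalues with hμ
  have hWW : W * star W = 1 := Matrix.mem_unitaryGroup_iff.mp hΛ1.1.eigenvectorUnitary.2
  have hWW' : star W * W = 1 := Matrix.mem_unitaryGroup_iff'.mp hΛ1.1.eigenvectorUnitary.2
  have hspec : (1 - Λ) = W * Matrix.diagonal (Complex.ofReal ∘ μ) * star W :=
    hΛ1.1.spectral_theorem
  have hsqrt : hΛ1.sqrt = W * Matrix.diagonal (Complex.ofReal ∘ Real.sqrt ∘ μ) * star W := rfl
  have hμ0 : ∀ i, 0 ≤ μ i := hΛ1.eigenvalues_nonneg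
  have hμ1 : ∀ i, μ i ≤ 1 := by
    intro i
    have hconj : star W * Λ * W = 1 - Matrix.diagonal (Complex.ofReal ∘ μ) := by
      have h0 : Λ = 1 - (1 - Λ) := (sub_sub_cancel 1 Λ).symm
      rw [h0, hspec, Matrix.mul_sub, Matrix.sub_mul, Matrix.mul_one,
        show star W * (W * Matrix.diagonal (Complex.ofReal ∘ μ) * star W) * W
          = (star W * W) * Matrix.diagonal (Complex.ofReal ∘ μ) * (star W * W) by
        simp only [Matrix.mul_assoc], hWW', Matrix.one_mul, Matrix.mul_one]
    have hpsd : (1 - Matrix.diagonal (Complex.ofReal ∘ μ)).PosSemidef := by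
      rw [← hconj]
      have := hΛ.conjTranspose_mul_mul_same W
      rwa [← Matrix.star_eq_conjTranspose] at this
    have : (1 - Matrix.diagonal (Complex.ofReal ∘ μ))
        = Matrix.diagonal (fun i => 1 - (μ i : ℂ)) := by
      rw [← Matrix.diagonal_one, Matrix.diagonal_sub]
      rfl
    rw [this, Matrix.posSemidef_diagonal_iff] at hpsd
    have := hpsd i
    rw [show (1 - (μ i : ℂ)) = ((1 - μ i : ℝ) : ℂ) by push_cast; ring] at this
    rw [Complex.zero_le_real] at this
    linarith
  have key : hΛ1.sqrt - (1 - Λ)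
      = W * Matrix.diagonal (fun i => ((Real.sqrt (μ i) - μ i : ℝ) : ℂ)) * star W := by
    rw [hsqrt]
    conv_lhs => rw [hspec]
    rw [← Matrix.sub_mul, ← Matrix.mul_sub, Matrix.diagonal_sub]
    congr 2
    ext i
    push_cast
    rfl
  rw [key]
  have : (Matrix.diagonal (fun i => ((Real.sqrt (μ i) - μ i : ℝ) : ℂ))).PosSemidef := by
    rw [Matrix.posSemidef_diagonal_iff]
    intro i
    rw [Complex.zero_le_real]
    have h1 : μ i ≤ Real.sqrt (μ i) := by
      nlinarith [Real.sq_sqrt (hμ0 i), Real.sqrt_nonneg (μ i), hμ0 i, hμ1 i]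
    linarith
  have := this.mul_mul_conjTranspose_same W
  rwa [← Matrix.star_eq_conjTranspose] at this

lemma real_key {p r ε : ℝ} (hp0 : 0 ≤ p) (hp1 : p ≤ 1) (hr0 : 0 ≤ r) (hr1 : r ≤ 1)
    (hε0 : 0 ≤ ε)
    (hcs : Real.sqrt (1 - ε) ≤ Real.sqrt (p * r) + Real.sqrt ((1 - p) * (1 - r))) :
    p - r ≤ Real.sqrt ε := by
  rcases le_or_gt 1 ε with h1e | h1e
  · calc p - r ≤ 1 := by linarith
    _ ≤ Real.sqrt ε := by
      rw [show (1:ℝ) = Real.sqrt 1 from (Real.sqrt_one).symm]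
      exact Real.sqrt_le_sqrt h1e
  · set a := Real.sqrt (p * r) with ha
    set b := Real.sqrt ((1 - p) * (1 - r)) with hb
    set c := Real.sqrt (p * (1 - p)) with hc
    set e := Real.sqrt (r * (1 - r)) with he
    have ha2 : a ^ 2 = p * r := Real.sq_sqrt (by positivity)
    have hb2 : b ^ 2 = (1 - p) * (1 - r) := Real.sq_sqrt (by nlinarith)
    have hc2 : c ^ 2 = p * (1 - p) := Real.sq_sqrt (by nlinarith)
    have he2 : e ^ 2 = r * (1 - r) := Real.sq_sqrt (by nlinarith)
    have habce : a * b = c * e := by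
      rw [ha, hb, hc, he, ← Real.sqrt_mul (by positivity), ← Real.sqrt_mul (by nlinarith)]
      ring_nf
    have hab : 1 - ε ≤ (a + b) ^ 2 := by
      have h := mul_self_le_mul_self (Real.sqrt_nonneg (1 - ε)) hcs
      rw [Real.mul_self_sqrt (by linarith)] at h
      nlinarith
    have hsq : (p - r) ^ 2 ≤ ε := by nlinarith [sq_nonneg (c - e)]
    calc p - r ≤ |p - r| := le_abs_self _
      _ = Real.sqrt ((p - r) ^ 2) := (Real.sqrt_sq_eq_abs _).symm
      _ ≤ Real.sqrt ε := Real.sqrt_le_sqrt hsq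

lemma trace_unitary_conj {V X : Matrix (Fin d) (Fin d) ℂ} (hV : star V * V = 1) :
    (V * X * star V).trace = X.trace := by
  rw [Matrix.trace_mul_comm,
    show star V * (V * X) = (star V * V) * X by simp only [Matrix.mul_assoc], hV, Matrix.one_mul]

lemma complex_nonneg_re {z : ℂ} (h : 0 ≤ z) : z = (z.re : ℂ) ∧ 0 ≤ z.re := by
  rw [Complex.le_def] at h
  refine ⟨Complex.ext rfl ?_, by simpa using h.1⟩
  simp [← h.2]

set_option maxHeartbeats 1000000

/-- **Almost As Good As New Lemma** (gentle measurement).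
If a POVM element `Λ` accepts the density matrix `ρ` with probability `ε < 1`,
then the normalized post-measurement state `ρ₀ = √(1-Λ) ρ √(1-Λ) / (1-ε)`
conditioned on outcome 0 satisfies `‖ρ - ρ₀‖_tr ≤ √ε`, where the trace
distance is half the sum of the absolute values of the eigenvalues of `ρ - ρ₀`. -/
theorem almost_as_good_as_new {d : ℕ}
    (ρ Λ : Matrix (Fin d) (Fin d) ℂ)
    (hρ : ρ.PosSemidef) (hρtr : ρ.trace = 1)
    (hΛ : Λ.PosSemidef) (hΛ1 : (1 - Λ).PosSemidef)
    (ε : ℝ) (hε : (Λ * ρ).trace = (ε : ℂ)) (hεlt : ε < 1)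
    (ρ₀ : Matrix (Fin d) (Fin d) ℂ)
    (hρ₀ : ρ₀ = ((1 - ε : ℝ) : ℂ)⁻¹ • (hΛ1.sqrt * ρ * hΛ1.sqrt))
    (hHerm : (ρ - ρ₀).IsHermitian) :
    (1 / 2) * ∑ i, |hHerm.eigenvalues i| ≤ Real.sqrt ε := by
  set N : Matrix (Fin d) (Fin d) ℂ := hΛ1.sqrt with hNdef
  have hN : N.IsHermitian := hΛ1.posSemidef_sqrt.1
  have hNpsd : N.PosSemidef := hΛ1.posSemidef_sqrt
  have hNN : N * N = 1 - Λ := hΛ1.sqrt_mul_self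
  set σ : Matrix (Fin d) (Fin d) ℂ := N * ρ * N with hσdef
  have hσpsd : σ.PosSemidef := by
    have h := hρ.mul_mul_conjTranspose_same N
    rwa [hN.eq] at h
  -- ε ≥ 0
  have hε0 : 0 ≤ ε := by
    have h := trace_mul_psd_nonneg hΛ hρ
    rw [hε] at h
    exact_mod_cast (Complex.zero_le_real).mp h
  have h1ε : (0:ℝ) < 1 - ε := by linarith
  have h1εC : ((1 - ε : ℝ) : ℂ) ≠ 0 := by exact_mod_cast ne_of_gt h1ε
  -- trace of (1-Λ)ρ and σ
  have h1Λρ : ((1 - Λ) * ρ).trace = ((1 - ε : ℝ) : ℂ) := by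
    rw [Matrix.sub_mul, Matrix.one_mul, Matrix.trace_sub, hρtr, hε]
    push_cast; ring
  have hσtr : σ.trace = ((1 - ε : ℝ) : ℂ) := by
    rw [hσdef, Matrix.trace_mul_comm, ← Matrix.mul_assoc, hNN, h1Λρ]
  have hρ₀tr : ρ₀.trace = 1 := by
    rw [hρ₀, Matrix.trace_smul, hσtr, smul_eq_mul, inv_mul_cancel₀ h1εC]
  -- eigenvalues of the difference
  set lam : Fin d → ℝ := hHerm.eigenvalues with hlam
  have hsum0 : ∑ i, lam i = 0 := by
    have h := trace_eq_sum_eigen hHerm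
    rw [Matrix.trace_sub, hρtr, hρ₀tr, sub_self] at h
    exact_mod_cast h.symm
  set T : ℝ := ∑ i, if 0 ≤ lam i then lam i else 0 with hT
  have hgoal_eq : (1 / 2 : ℝ) * ∑ i, |lam i| = T := by
    have habs : ∀ i, |lam i| = 2 * (if 0 ≤ lam i then lam i else 0) - lam i := by
      intro i
      by_cases h : 0 ≤ lam i
      · simp [h, abs_of_nonneg h]; ring
      · simp [h, abs_of_neg (lt_of_not_ge h)]
    rw [Finset.sum_congr rfl fun i _ => habs i, Finset.sum_sub_distrib, ← Finset.mul_sum,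
      hsum0, ← hT]
    ring
  rw [hgoal_eq]
  -- the projection P onto the nonnegative eigenspace
  set V : Matrix (Fin d) (Fin d) ℂ := (hHerm.eigenvectorUnitary : Matrix (Fin d) (Fin d) ℂ)
    with hVdef
  have hVV : V * star V = 1 := Matrix.mem_unitaryGroup_iff.mp hHerm.eigenvectorUnitary.2
  have hVV' : star V * V = 1 := Matrix.mem_unitaryGroup_iff'.mp hHerm.eigenvectorUnitary.2
  set D₀ : Matrix (Fin d) (Fin d) ℂ := Matrix.diagonal (fun i => if 0 ≤ lam i then 1 else 0)
    with hD₀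
  set D₁ : Matrix (Fin d) (Fin d) ℂ := Matrix.diagonal (fun i => if 0 ≤ lam i then 0 else 1)
    with hD₁
  set P : Matrix (Fin d) (Fin d) ℂ := V * D₀ * star V with hPdef
  set P' : Matrix (Fin d) (Fin d) ℂ := V * D₁ * star V with hP'def
  have hD₀psd : D₀.PosSemidef := by
    rw [hD₀, Matrix.posSemidef_diagonal_iff]
    intro i; split
    · exact zero_le_one
    · exact le_refl 0
  have hD₁psd : D₁.PosSemidef := by
    rw [hD₁, Matrix.posSemidef_diagonal_iff]
    intro i; split
    · exact le_refl 0
    · exact zero_le_one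
  have hPpsd : P.PosSemidef := by
    have h := hD₀psd.mul_mul_conjTranspose_same V
    rwa [← Matrix.star_eq_conjTranspose] at h
  have hP'psd : P'.PosSemidef := by
    have h := hD₁psd.mul_mul_conjTranspose_same V
    rwa [← Matrix.star_eq_conjTranspose] at h
  have hD₀1 : D₀ + D₁ = 1 := by
    rw [hD₀, hD₁, Matrix.diagonal_add]
    have hfun : (fun i => (if 0 ≤ lam i then (1:ℂ) else 0) + if 0 ≤ lam i then 0 else 1)
        = fun _ => (1:ℂ) := by
      funext i; split <;> norm_num
    rw [hfun, Matrix.diagonal_one]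
  have hPP' : P + P' = 1 := by
    rw [hPdef, hP'def, ← Matrix.add_mul, ← Matrix.mul_add, hD₀1, Matrix.mul_one, hVV]
  have hD₀2 : D₀ * D₀ = D₀ := by
    rw [hD₀, Matrix.diagonal_mul_diagonal]
    exact congrArg Matrix.diagonal (funext fun i => by split <;> norm_num)
  have hD₁2 : D₁ * D₁ = D₁ := by
    rw [hD₁, Matrix.diagonal_mul_diagonal]
    exact congrArg Matrix.diagonal (funext fun i => by split <;> norm_num)
  have hP2 : P * P = P := by
    rw [hPdef, show V * D₀ * star V * (V * D₀ * star V)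
        = V * (D₀ * ((star V * V) * (D₀ * star V))) by simp only [Matrix.mul_assoc], hVV',
      Matrix.one_mul, show D₀ * (D₀ * star V) = (D₀ * D₀) * star V by
        simp only [Matrix.mul_assoc], hD₀2, Matrix.mul_assoc]
  have hP'2 : P' * P' = P' := by
    rw [hP'def, show V * D₁ * star V * (V * D₁ * star V)
        = V * (D₁ * ((star V * V) * (D₁ * star V))) by simp only [Matrix.mul_assoc], hVV',
      Matrix.one_mul, show D₁ * (D₁ * star V) = (D₁ * D₁) * star V by
        simp only [Matrix.mul_assoc], hD₁2, Matrix.mul_assoc]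
  -- trace of P * (ρ - ρ₀) equals T
  have hspec : ρ - ρ₀ = V * Matrix.diagonal (RCLike.ofReal ∘ lam) * star V :=
    hHerm.spectral_theorem
  have hPΔ : (P * (ρ - ρ₀)).trace = ((T : ℝ) : ℂ) := by
    rw [hspec, hPdef, show V * D₀ * star V * (V * Matrix.diagonal (RCLike.ofReal ∘ lam) * star V)
        = V * (D₀ * ((star V * V) * (Matrix.diagonal (RCLike.ofReal ∘ lam) * star V)))
        by simp only [Matrix.mul_assoc], hVV', Matrix.one_mul]
    rw [show V * (D₀ * (Matrix.diagonal (RCLike.ofReal ∘ lam) * star V))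
        = V * (D₀ * Matrix.diagonal (RCLike.ofReal ∘ lam)) * star V
        by simp only [Matrix.mul_assoc]]
    rw [trace_unitary_conj hVV', hD₀, Matrix.diagonal_mul_diagonal, Matrix.trace_diagonal]
    rw [hT]
    push_cast
    refine Finset.sum_congr rfl fun i _ => ?_
    split <;> simp
  -- real quantities
  obtain ⟨hpc, hp0⟩ := complex_nonneg_re (trace_mul_psd_nonneg hPpsd hρ)
  obtain ⟨hp'c, hp'0⟩ := complex_nonneg_re (trace_mul_psd_nonneg hP'psd hρ)
  obtain ⟨hqc, hq0⟩ := complex_nonneg_re (trace_mul_psd_nonneg hPpsd hσpsd)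
  obtain ⟨hq'c, hq'0⟩ := complex_nonneg_re (trace_mul_psd_nonneg hP'psd hσpsd)
  set p : ℝ := (P * ρ).trace.re with hp
  set p' : ℝ := (P' * ρ).trace.re with hp'
  set q : ℝ := (P * σ).trace.re with hq
  set q' : ℝ := (P' * σ).trace.re with hq'
  have hpsum : p + p' = 1 := by
    have h : (P * ρ).trace + (P' * ρ).trace = 1 := by
      rw [← Matrix.trace_add, ← Matrix.add_mul, hPP', Matrix.one_mul, hρtr]
    rw [hpc, hp'c] at h
    exact_mod_cast h
  have hqsum : q + q' = 1 - ε := by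
    have h : (P * σ).trace + (P' * σ).trace = ((1 - ε : ℝ) : ℂ) := by
      rw [← Matrix.trace_add, ← Matrix.add_mul, hPP', Matrix.one_mul, hσtr]
    rw [hqc, hq'c] at h
    exact_mod_cast h
  -- T = p - (1-ε)⁻¹ q
  have hTeq : T = p - (1 - ε)⁻¹ * q := by
    have h : (P * (ρ - ρ₀)).trace = (P * ρ).trace - ((1 - ε : ℝ) : ℂ)⁻¹ * (P * σ).trace := by
      rw [Matrix.mul_sub, Matrix.trace_sub, hρ₀, Matrix.mul_smul,
        Matrix.trace_smul, smul_eq_mul]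
    rw [hPΔ, hpc, hqc] at h
    have h2 : ((T : ℝ) : ℂ) = ((p - (1 - ε)⁻¹ * q : ℝ) : ℂ) := by
      rw [h]; push_cast; ring
    exact_mod_cast h2
  rw [hTeq]
  -- lower bound on re tr(Nρ)
  have hNρ : 1 - ε ≤ (N * ρ).trace.re := by
    have hpsd := sqrt_sub_sq_psd hΛ hΛ1
    have h := trace_mul_psd_nonneg hpsd hρ
    rw [Matrix.sub_mul, Matrix.trace_sub, h1Λρ] at h
    have h2 := (Complex.le_def.mp h).1
    simpa using h2
  -- split tr(Nρ) by P, P'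
  have hsplit : (N * ρ).trace.re = (P * (N * ρ)).trace.re + (P' * (N * ρ)).trace.re := by
    have h : (N * ρ).trace = (P * (N * ρ)).trace + (P' * (N * ρ)).trace := by
      rw [← Matrix.trace_add, ← Matrix.add_mul, hPP', Matrix.one_mul]
    rw [h, Complex.add_re]
  -- Cauchy-Schwarz bounds
  have hcs1 := proj_cs P N ρ hPpsd.1 hP2 hρ hN
  have hcs2 := proj_cs P' N ρ hP'psd.1 hP'2 hρ hN
  rw [← hσdef] at hcs1 hcs2
  rw [← hp, ← hq] at hcs1
  rw [← hp', ← hq'] at hcs2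
  -- combine
  have hkey : 1 - ε ≤ Real.sqrt (p * q) + Real.sqrt (p' * q') := by
    rw [Real.sqrt_mul hp0, Real.sqrt_mul hp'0]
    calc 1 - ε ≤ (N * ρ).trace.re := hNρ
      _ = (P * (N * ρ)).trace.re + (P' * (N * ρ)).trace.re := hsplit
      _ ≤ Real.sqrt p * Real.sqrt q + Real.sqrt p' * Real.sqrt q' := add_le_add hcs1 hcs2
  -- normalize and apply the real lemma
  set r : ℝ := (1 - ε)⁻¹ * q with hr
  have hr0 : 0 ≤ r := by
    rw [hr]
    exact mul_nonneg (inv_nonneg.mpr (le_of_lt h1ε)) hq0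
  have hr1 : r ≤ 1 := by
    rw [hr]
    have hq1ε : q ≤ 1 - ε := by linarith
    calc (1 - ε)⁻¹ * q ≤ (1 - ε)⁻¹ * (1 - ε) :=
          mul_le_mul_of_nonneg_left hq1ε (by positivity)
      _ = 1 := inv_mul_cancel₀ (ne_of_gt h1ε)
  have hp1 : p ≤ 1 := by linarith
  have hq_eq : q = (1 - ε) * r := by
    rw [hr, ← mul_assoc, mul_inv_cancel₀ (ne_of_gt h1ε), one_mul]
  have hq'_eq : q' = (1 - ε) * (1 - r) := by
    have : q' = (1 - ε) - q := by linarith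
    rw [this, hq_eq]; ring
  have hp'_eq : p' = 1 - p := by linarith
  have hcs_final : Real.sqrt (1 - ε) ≤ Real.sqrt (p * r) + Real.sqrt ((1 - p) * (1 - r)) := by
    have h : 1 - ε ≤ Real.sqrt (1 - ε) * (Real.sqrt (p * r) + Real.sqrt ((1 - p) * (1 - r))) := by
      calc 1 - ε ≤ Real.sqrt (p * q) + Real.sqrt (p' * q') := hkey
        _ = Real.sqrt (1 - ε) * (Real.sqrt (p * r) + Real.sqrt ((1 - p) * (1 - r))) := by
          rw [hq_eq, hq'_eq, hp'_eq,
            show p * ((1 - ε) * r) = (1 - ε) * (p * r) by ring,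
            show (1 - p) * ((1 - ε) * (1 - r)) = (1 - ε) * ((1 - p) * (1 - r)) by ring,
            Real.sqrt_mul (le_of_lt h1ε), Real.sqrt_mul (le_of_lt h1ε)]
          ring
    have hsq : Real.sqrt (1 - ε) * Real.sqrt (1 - ε) = 1 - ε := Real.mul_self_sqrt (le_of_lt h1ε)
    have hpos : 0 < Real.sqrt (1 - ε) := Real.sqrt_pos.mpr h1ε
    nlinarith
  have := real_key hp0 hp1 hr0 hr1 hε0 hcs_final
  linarith [this]
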